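/- arXiv:2412.20115 — 2 statements merged into one kernel-verified Lean document; each statement's English description precedes it below -/
import Mathlib

section
/- Let f : E → ℝ be differentiable, L-smooth, and μ-strongly convex with 0 < μ ≤ L, and let x* ∈ E be a global minimizer of f. Let x : ℕ → E be the gradient descent sequence with constant step size λ = 1/L starting from x_0. Then for every n ≥ 1, f(x_n) - f(x*) ≤ (L/2)·(1 - μ/L)^n·‖x_0 - x*‖². -/
open RealInnerProductSpace

/-- Descent lemma from Lipschitz gradient. -/
lemma descent_lemma {E : Type*} [NormedAddCommGroup E] [InnerProductSpace ℝ E] [CompleteSpace E]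
    (f : E → ℝ) (f' : E → E) (L : ℝ) (hL : 0 < L)
    (hdiff : ∀ x, HasGradientAt f (f' x) x)
    (hsmooth : ∀ x y, ‖f' x - f' y‖ ≤ L * ‖x - y‖) (a b : E) :
    f b ≤ f a + ⟪f' a, b - a⟫ + L / 2 * ‖b - a‖ ^ 2 := by
  set v := b - a with hv
  set ψ : ℝ → ℝ := fun t => f (a + t • v) - t * ⟪f' a, v⟫ - L / 2 * t ^ 2 * ‖v‖ ^ 2 with hψ
  have hder : ∀ t : ℝ, HasDerivAt ψ
      (⟪f' (a + t • v), v⟫ - ⟪f' a, v⟫ - L * t * ‖v‖ ^ 2) t := by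
    intro t
    have hc : HasDerivAt (fun t : ℝ => a + t • v) v t := by
      simpa using ((hasDerivAt_id t).smul_const v).const_add a
    have h1 : HasDerivAt (fun t : ℝ => f (a + t • v)) ⟪f' (a + t • v), v⟫ t := by
      have := (hdiff (a + t • v)).hasFDerivAt.comp_hasDerivAt t hc
      simp at this
      exact this
    have h2 : HasDerivAt (fun t : ℝ => t * ⟪f' a, v⟫) ⟪f' a, v⟫ t := by
      simpa using (hasDerivAt_id t).mul_const (⟪f' a, v⟫ : ℝ)
    have h3 : HasDerivAt (fun t : ℝ => L / 2 * t ^ 2 * ‖v‖ ^ 2) (L * t * ‖v‖ ^ 2) t := by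
      have := ((hasDerivAt_pow 2 t).const_mul (L / 2)).mul_const (‖v‖ ^ 2)
      convert this using 1
      · rfl
      · rfl
      · ring
    have := (h1.sub h2).sub h3
    exact this
  have hanti : AntitoneOn ψ (Set.Icc 0 1) := by
    apply antitoneOn_of_deriv_nonpos (convex_Icc (0:ℝ) 1)
    · exact fun t _ => (hder t).continuousAt.continuousWithinAt
    · exact fun t _ => (hder t).differentiableAt.differentiableWithinAt
    · intro t ht
      rw [interior_Icc] at ht
      rw [(hder t).deriv]
      have key : ⟪f' (a + t • v), v⟫ - ⟪f' a, v⟫ ≤ L * t * ‖v‖ ^ 2 := by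
        rw [← inner_sub_left]
        calc ⟪f' (a + t • v) - f' a, v⟫ ≤ ‖f' (a + t • v) - f' a‖ * ‖v‖ :=
              real_inner_le_norm _ _
          _ ≤ L * ‖(a + t • v) - a‖ * ‖v‖ := by
              have := hsmooth (a + t • v) a
              nlinarith [norm_nonneg v]
          _ = L * (|t| * ‖v‖) * ‖v‖ := by rw [add_sub_cancel_left, norm_smul]; norm_num
          _ = L * |t| * ‖v‖ ^ 2 := by ring
          _ ≤ L * t * ‖v‖ ^ 2 := by
              rw [abs_of_pos ht.1]
      linarith
  have := hanti (Set.left_mem_Icc.2 zero_le_one) (Set.right_mem_Icc.2 zero_le_one) zero_le_one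
  simp only [hψ] at this
  have hb : a + (1:ℝ) • v = b := by simp [hv]
  rw [hb] at this
  simp at this
  linarith

theorem gd_strongly_convex_value_rate {E : Type*} [NormedAddCommGroup E]
    [InnerProductSpace ℝ E] [CompleteSpace E]
    (f : E → ℝ) (f' : E → E) (L μ : ℝ) (hμ : 0 < μ) (hμL : μ ≤ L)
    (hdiff : ∀ x, HasGradientAt f (f' x) x)
    (hsmooth : ∀ x y, ‖f' x - f' y‖ ≤ L * ‖x - y‖)
    (hstrong : ∀ x y, f x + ⟪f' x, y - x⟫ + (μ / 2) * ‖y - x‖ ^ 2 ≤ f y)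
    (xstar : E) (hmin : ∀ y, f xstar ≤ f y)
    (x : ℕ → E)
    (hiter : ∀ k, x (k + 1) = x k - (1 / L) • f' (x k)) :
    ∀ n : ℕ, 1 ≤ n →
      f (x n) - f xstar ≤ (L / 2) * (1 - μ / L) ^ n * ‖x 0 - xstar‖ ^ 2 := by
  have hL : (0:ℝ) < L := hμ.trans_le hμL
  -- gradient at minimizer is zero
  have hgstar : f' xstar = 0 := by
    have hdes := descent_lemma f f' L hL hdiff hsmooth xstar (xstar - (1/L) • f' xstar)
    have hmin' := hmin (xstar - (1/L) • f' xstar)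
    have hsub : xstar - (1/L) • f' xstar - xstar = -((1/L) • f' xstar) := by abel
    rw [hsub] at hdes
    have hnorm : ‖((1:ℝ)/L) • f' xstar‖^2 = 1/L^2 * ‖f' xstar‖^2 := by
      rw [norm_smul, mul_pow, Real.norm_eq_abs, sq_abs]; field_simp
    rw [inner_neg_right, real_inner_smul_right, real_inner_self_eq_norm_sq, norm_neg,
      hnorm] at hdes
    have hkey : L/2 * (1/L^2 * ‖f' xstar‖^2) = 1/(2*L) * ‖f' xstar‖^2 := by
      field_simp
    rw [hkey] at hdes
    have hhalf : 1/L * ‖f' xstar‖^2 = 2*(1/(2*L) * ‖f' xstar‖^2) := by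
      field_simp
    have h0 : 1/(2*L) * ‖f' xstar‖^2 ≤ 0 := by linarith
    have h2 : ‖f' xstar‖ ^ 2 ≤ 0 := by
      have := mul_le_mul_of_nonneg_left h0 (le_of_lt (by positivity : (0:ℝ) < 2*L))
      rw [mul_zero] at this
      calc ‖f' xstar‖^2 = 2*L*(1/(2*L) * ‖f' xstar‖^2) := by field_simp
        _ ≤ 0 := this
    have : ‖f' xstar‖ = 0 := by nlinarith [sq_nonneg ‖f' xstar‖, norm_nonneg (f' xstar)]
    exact norm_eq_zero.mp this
  -- one-step contraction
  have hstep : ∀ k : ℕ, ‖x (k+1) - xstar‖ ^ 2 ≤ (1 - μ / L) * ‖x k - xstar‖ ^ 2 := by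
    intro k
    set a := x k
    set g := f' a
    -- norm expansion
    have hexp : ‖x (k+1) - xstar‖ ^ 2
        = ‖a - xstar‖ ^ 2 - 2 * (1/L) * ⟪g, a - xstar⟫ + (1/L)^2 * ‖g‖ ^ 2 := by
      rw [hiter k]
      have : a - (1/L) • g - xstar = (a - xstar) - (1/L) • g := by abel
      rw [this, norm_sub_sq_real, real_inner_smul_right, norm_smul]
      simp only [Real.norm_eq_abs, abs_of_pos (by positivity : (0:ℝ) < 1/L)]
      rw [real_inner_comm]
      ring
    -- strong convexity bound
    have hsc := hstrong a xstar
    have hsc' : f a - f xstar + μ/2 * ‖a - xstar‖^2 ≤ ⟪g, a - xstar⟫ := by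
      have : ⟪g, xstar - a⟫ = -⟪g, a - xstar⟫ := by
        rw [← inner_neg_right]; congr 1; abel
      rw [this] at hsc
      have hn : ‖xstar - a‖ = ‖a - xstar‖ := norm_sub_rev _ _
      rw [hn] at hsc
      linarith
    -- gradient norm bound via descent lemma
    have hdes := descent_lemma f f' L hL hdiff hsmooth a (x (k+1))
    have hgb : ‖g‖ ^ 2 ≤ 2 * L * (f a - f xstar) := by
      rw [hiter k] at hdes
      have h1 : a - (1/L) • g - a = -((1/L) • g) := by abel
      have hnorm : ‖((1:ℝ)/L) • g‖^2 = 1/L^2 * ‖g‖^2 := by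
        rw [norm_smul, mul_pow, Real.norm_eq_abs, sq_abs]; field_simp
      rw [h1, inner_neg_right, real_inner_smul_right, real_inner_self_eq_norm_sq,
        norm_neg, hnorm] at hdes
      have hmin' := hmin (x (k+1))
      rw [hiter k] at hmin'
      have hkey : -(1/L * ‖g‖^2) + L/2 * (1/L^2 * ‖g‖^2) = -(1/(2*L) * ‖g‖^2) := by
        field_simp; ring
      have hhalf : 1/L * ‖g‖^2 = 2*(1/(2*L) * ‖g‖^2) := by
        field_simp
      have h0 : 1/(2*L) * ‖g‖^2 ≤ f a - f xstar := by linarith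
      have := mul_le_mul_of_nonneg_left h0 (le_of_lt (by positivity : (0:ℝ) < 2*L))
      calc ‖g‖^2 = 2*L*(1/(2*L) * ‖g‖^2) := by field_simp
        _ ≤ 2*L*(f a - f xstar) := this
    rw [hexp]
    have hL2 : (0:ℝ) < L^2 := by positivity
    have h2L : 2 * (1/L) * ⟪g, a - xstar⟫ ≥ 2/L * (f a - f xstar) + μ/L * ‖a - xstar‖^2 := by
      have h := mul_le_mul_of_nonneg_left hsc' (by positivity : (0:ℝ) ≤ 2 * (1/L))
      calc 2/L * (f a - f xstar) + μ/L * ‖a - xstar‖^2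
          = 2 * (1/L) * (f a - f xstar + μ/2 * ‖a - xstar‖^2) := by field_simp
        _ ≤ 2 * (1/L) * ⟪g, a - xstar⟫ := h
    have h3 : (1/L)^2 * ‖g‖^2 ≤ (1/L)^2 * (2 * L * (f a - f xstar)) :=
      mul_le_mul_of_nonneg_left hgb (by positivity)
    have h4 : (1/L)^2 * (2 * L * (f a - f xstar)) = 2/L * (f a - f xstar) := by
      field_simp
    have h5 : (1 - μ/L) * ‖a - xstar‖^2 = ‖a - xstar‖^2 - μ/L * ‖a - xstar‖^2 := by ring
    linarith
  -- iterate
  have hiterbound : ∀ n : ℕ, ‖x n - xstar‖ ^ 2 ≤ (1 - μ/L)^n * ‖x 0 - xstar‖^2 := by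
    intro n
    induction n with
    | zero => simp
    | succ k ih =>
      have hfac : (0:ℝ) ≤ 1 - μ/L := by
        rw [sub_nonneg]; exact div_le_one_of_le₀ hμL hL.le
      calc ‖x (k+1) - xstar‖^2 ≤ (1 - μ/L) * ‖x k - xstar‖^2 := hstep k
        _ ≤ (1 - μ/L) * ((1 - μ/L)^k * ‖x 0 - xstar‖^2) :=
            mul_le_mul_of_nonneg_left ih hfac
        _ = (1 - μ/L)^(k+1) * ‖x 0 - xstar‖^2 := by ring
  intro n _
  have hdes := descent_lemma f f' L hL hdiff hsmooth xstar (x n)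
  rw [hgstar] at hdes
  simp only [inner_zero_left, add_zero] at hdes
  have hn : ‖x n - xstar‖^2 ≤ (1 - μ/L)^n * ‖x 0 - xstar‖^2 := hiterbound n
  have := mul_le_mul_of_nonneg_left hn (by positivity : (0:ℝ) ≤ L/2)
  calc f (x n) - f xstar ≤ L/2 * ‖x n - xstar‖^2 := by linarith
    _ ≤ L/2 * ((1 - μ/L)^n * ‖x 0 - xstar‖^2) := this
    _ = (L/2) * (1 - μ/L)^n * ‖x 0 - xstar‖^2 := by ring
end

section
/- Let f : E → ℝ be differentiable, convex, and L-smooth with L > 0, let g : E → ℝ be convex and continuous, and let 0 < λ ≤ 1/L. Let x_k ∈ E, let x_{k+1} be a global minimizer over y ∈ E of y ↦ (1/(2λ))·‖y - (x_k - λ·∇f(x_k))‖² + g(y), and set G = (1/λ)·(x_k - x_{k+1}) and F = f + g. Then for every z ∈ E, F(x_{k+1}) ≤ F(z) - ⟨G, z - x_k⟩ - (1/(2λ))·‖x_{k+1} - x_k‖². -/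
open RealInnerProductSpace

lemma line_hasDerivAt {E : Type*} [NormedAddCommGroup E] [InnerProductSpace ℝ E] [CompleteSpace E]
    (f : E → ℝ) (f' : E → E) (hdiff : ∀ x, HasGradientAt f (f' x) x)
    (x w : E) (t : ℝ) :
    HasDerivAt (fun s : ℝ => f (x + s • w)) ⟪f' (x + t • w), w⟫ t := by
  have hc : HasDerivAt (fun s : ℝ => x + s • w) w t := by
    simpa using ((hasDerivAt_id t).smul_const w).const_add x
  have hf := (hasGradientAt_iff_hasFDerivAt.1 (hdiff (x + t • w)))
  have := hf.comp_hasDerivAt t hc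
  simp at this
  exact this

lemma grad_convex_lb {E : Type*} [NormedAddCommGroup E] [InnerProductSpace ℝ E] [CompleteSpace E]
    (f : E → ℝ) (f' : E → E) (hdiff : ∀ x, HasGradientAt f (f' x) x)
    (hfconv : ConvexOn ℝ Set.univ f) (x z : E) :
    f x + ⟪f' x, z - x⟫ ≤ f z := by
  set w := z - x with hw
  have hφ : ConvexOn ℝ Set.univ (fun s : ℝ => f (x + s • w)) := by
    have := hfconv.comp_affineMap (AffineMap.lineMap x z)
    have he : (f ∘ AffineMap.lineMap x z) = fun s : ℝ => f (x + s • w) := by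
      funext s
      simp [AffineMap.lineMap_apply, hw]
      congr 1
      abel
    rw [he] at this
    simpa using this
  have hd : HasDerivAt (fun s : ℝ => f (x + s • w)) ⟪f' (x + (0:ℝ) • w), w⟫ 0 :=
    line_hasDerivAt f f' hdiff x w 0
  have hd0 : HasDerivAt (fun s : ℝ => f (x + s • w)) ⟪f' x, w⟫ 0 := by
    simpa using hd
  have := hφ.le_slope_of_hasDerivAt (Set.mem_univ 0) (Set.mem_univ 1) zero_lt_one hd0
  rw [slope_def_field] at this
  simp at this
  have h1 : x + w = z := by rw [hw]; abel
  rw [h1] at this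
  linarith

lemma smooth_descent {E : Type*} [NormedAddCommGroup E] [InnerProductSpace ℝ E] [CompleteSpace E]
    (f : E → ℝ) (f' : E → E) (L : ℝ) (hL : 0 < L)
    (hdiff : ∀ x, HasGradientAt f (f' x) x)
    (hsmooth : ∀ x y, ‖f' x - f' y‖ ≤ L * ‖x - y‖) (x y : E) :
    f y ≤ f x + ⟪f' x, y - x⟫ + L / 2 * ‖y - x‖ ^ 2 := by
  set w := y - x with hw
  have hcont : Continuous f' := by
    apply (LipschitzWith.of_dist_le_mul (K := L.toNNReal) ?_).continuous
    intro a b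
    simpa [dist_eq_norm, Real.coe_toNNReal L hL.le] using hsmooth a b
  have hψcont : Continuous (fun t : ℝ => ⟪f' (x + t • w), w⟫) := by
    exact (hcont.comp (continuous_const.add (continuous_id.smul continuous_const))).inner
      continuous_const
  have hFTC : ∫ t in (0:ℝ)..1, ⟪f' (x + t • w), w⟫ =
      f (x + (1:ℝ) • w) - f (x + (0:ℝ) • w) := by
    exact intervalIntegral.integral_eq_sub_of_hasDerivAt
      (fun t _ => line_hasDerivAt f f' hdiff x w t) (hψcont.intervalIntegrable 0 1)
  have hpt : ∀ t ∈ Set.Icc (0:ℝ) 1,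
      ⟪f' (x + t • w), w⟫ ≤ ⟪f' x, w⟫ + L * t * ‖w‖ ^ 2 := by
    intro t ht
    have h1 : ⟪f' (x + t • w), w⟫ - ⟪f' x, w⟫ = ⟪f' (x + t • w) - f' x, w⟫ := by
      rw [inner_sub_left]
    have h2 : ⟪f' (x + t • w) - f' x, w⟫ ≤ ‖f' (x + t • w) - f' x‖ * ‖w‖ :=
      real_inner_le_norm _ _
    have h3 : ‖f' (x + t • w) - f' x‖ ≤ L * (t * ‖w‖) := by
      have := hsmooth (x + t • w) x
      simpa [norm_smul, abs_of_nonneg ht.1] using this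
    nlinarith [norm_nonneg w, norm_nonneg (f' (x + t • w) - f' x)]
  have hint2 : IntervalIntegrable (fun t : ℝ => ⟪f' x, w⟫ + L * t * ‖w‖ ^ 2)
      MeasureTheory.volume 0 1 := by
    apply Continuous.intervalIntegrable
    continuity
  have hmono := intervalIntegral.integral_mono_on zero_le_one
    (hψcont.intervalIntegrable 0 1) hint2 hpt
  have hrhs : ∫ t in (0:ℝ)..1, (⟪f' x, w⟫ + L * t * ‖w‖ ^ 2) =
      ⟪f' x, w⟫ + L / 2 * ‖w‖ ^ 2 := by
    rw [intervalIntegral.integral_add intervalIntegrable_const (by apply Continuous.intervalIntegrable; continuity)]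
    have he : (fun t : ℝ => L * t * ‖w‖ ^ 2) = fun t : ℝ => t * (L * ‖w‖ ^ 2) := by
      funext t; ring
    rw [he, intervalIntegral.integral_mul_const, integral_id]
    simp
    ring
  rw [hFTC, hrhs] at hmono
  simp at hmono
  have h1 : x + w = y := by rw [hw]; abel
  rw [h1] at hmono
  linarith
theorem prox_gd_descent_lemma {E : Type*} [NormedAddCommGroup E]
    [InnerProductSpace ℝ E] [CompleteSpace E]
    (f g : E → ℝ) (f' : E → E) (L : ℝ) (hL : 0 < L)
    (hdiff : ∀ x, HasGradientAt f (f' x) x)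
    (hfconv : ConvexOn ℝ Set.univ f)
    (hsmooth : ∀ x y, ‖f' x - f' y‖ ≤ L * ‖x - y‖)
    (hgconv : ConvexOn ℝ Set.univ g) (hgcont : Continuous g)
    (lam : ℝ) (hlam : 0 < lam) (hlamL : lam ≤ 1 / L)
    (xk xk1 : E)
    (hprox : ∀ y : E,
      (1 / (2 * lam)) * ‖xk1 - (xk - lam • f' xk)‖ ^ 2 + g xk1 ≤
        (1 / (2 * lam)) * ‖y - (xk - lam • f' xk)‖ ^ 2 + g y)
    (G : E) (hG : G = (1 / lam) • (xk - xk1))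
    (F : E → ℝ) (hF : F = fun y => f y + g y) :
    ∀ z : E,
      F xk1 ≤ F z - ⟪G, z - xk⟫ - (1 / (2 * lam)) * ‖xk1 - xk‖ ^ 2 := by
  intro z
  have hA := smooth_descent f f' L hL hdiff hsmooth xk xk1
  have hB := grad_convex_lb f f' hdiff hfconv xk z
  set v := xk - lam • f' xk with hv
  set u := xk1 - v with hu
  set w := z - xk1 with hw
  -- subgradient inequality for g at xk1
  have hC : g xk1 ≤ g z + (1 / lam) * ⟪u, w⟫ := by
    have key : ∀ t ∈ Set.Ioc (0:ℝ) 1,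
        g xk1 ≤ g z + (1 / lam) * ⟪u, w⟫ + t * ((1 / (2 * lam)) * ‖w‖ ^ 2) := by
      intro t ht
      have h1 := hprox (xk1 + t • w)
      have hcvx : g (xk1 + t • w) ≤ (1 - t) * g xk1 + t * g z := by
        have h2 := hgconv.2 (Set.mem_univ xk1) (Set.mem_univ z)
          (by linarith [ht.2] : (0:ℝ) ≤ 1 - t) ht.1.le (by ring)
        have he : (1 - t) • xk1 + t • z = xk1 + t • w := by
          rw [hw, smul_sub, sub_smul, one_smul]; abel
        rw [he] at h2
        simpa using h2
      have hnorm : ‖xk1 + t • w - v‖ ^ 2 = ‖u‖ ^ 2 + 2 * t * ⟪u, w⟫ + t ^ 2 * ‖w‖ ^ 2 := by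
        have he : xk1 + t • w - v = u + t • w := by rw [hu]; abel
        rw [he, norm_add_sq_real, real_inner_smul_right, norm_smul, mul_pow]
        simp [Real.norm_eq_abs, sq_abs]
        ring
      have e2 : (1 / (2 * lam)) * (‖u‖ ^ 2 + 2 * t * ⟪u, w⟫ + t ^ 2 * ‖w‖ ^ 2) =
          (1 / (2 * lam)) * ‖u‖ ^ 2 + t * ((1 / lam) * ⟪u, w⟫)
            + t ^ 2 * ((1 / (2 * lam)) * ‖w‖ ^ 2) := by
        field_simp
      rw [hnorm, e2] at h1
      have hmul : t * g xk1 ≤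
          t * (g z + (1 / lam) * ⟪u, w⟫ + t * ((1 / (2 * lam)) * ‖w‖ ^ 2)) := by
        nlinarith [h1, hcvx]
      exact le_of_mul_le_mul_left hmul ht.1
    have hlim : Filter.Tendsto
        (fun t : ℝ => g z + (1 / lam) * ⟪u, w⟫ + t * ((1 / (2 * lam)) * ‖w‖ ^ 2))
        (nhdsWithin 0 (Set.Ioi 0))
        (nhds (g z + (1 / lam) * ⟪u, w⟫ + 0 * ((1 / (2 * lam)) * ‖w‖ ^ 2))) := by
      apply Filter.Tendsto.mono_left _ nhdsWithin_le_nhds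
      exact Continuous.tendsto (by continuity) 0
    have hev : ∀ᶠ t in nhdsWithin (0:ℝ) (Set.Ioi 0),
        g xk1 ≤ g z + (1 / lam) * ⟪u, w⟫ + t * ((1 / (2 * lam)) * ‖w‖ ^ 2) :=
      Filter.eventually_of_mem (Ioc_mem_nhdsGT_of_mem ⟨le_refl 0, zero_lt_one⟩) key
    have := ge_of_tendsto hlim hev
    simpa using this
  -- identity for (1/lam) * ⟪u, w⟫
  have hvec : (1 / lam) • u = f' xk - G := by
    rw [hu, hv, hG]
    match_scalars <;> field_simp
  have eGnorm : ⟪G, xk1 - xk⟫ = -((1 / lam) * ‖xk1 - xk‖ ^ 2) := by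
    rw [hG, real_inner_smul_left]
    have he : xk - xk1 = -(xk1 - xk) := by abel
    rw [he, inner_neg_left, real_inner_self_eq_norm_sq]
    ring
  have hw2 : w = (z - xk) - (xk1 - xk) := by rw [hw]; abel
  have e3 : (1 / lam) * ⟪u, w⟫ =
      ⟪f' xk, w⟫ - ⟪G, z - xk⟫ - (1 / lam) * ‖xk1 - xk‖ ^ 2 := by
    have h5 : ⟪G, w⟫ = ⟪G, z - xk⟫ - ⟪G, xk1 - xk⟫ := by
      rw [hw2, inner_sub_right]
    rw [← real_inner_smul_left, hvec, inner_sub_left, h5, eGnorm]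
    ring
  have e4 : ⟪f' xk, w⟫ = ⟪f' xk, z - xk⟫ - ⟪f' xk, xk1 - xk⟫ := by
    rw [hw2, inner_sub_right]
  have hLlam : L / 2 * ‖xk1 - xk‖ ^ 2 ≤ (1 / (2 * lam)) * ‖xk1 - xk‖ ^ 2 := by
    have h1 : L * lam ≤ 1 := by
      rw [le_div_iff₀ hL] at hlamL; linarith
    have h2 : L / 2 ≤ 1 / (2 * lam) := by
      rw [div_le_div_iff₀ (by norm_num) (by positivity)]
      nlinarith
    nlinarith [sq_nonneg ‖xk1 - xk‖]
  have eid : (1 / lam) * ‖xk1 - xk‖ ^ 2 = 2 * ((1 / (2 * lam)) * ‖xk1 - xk‖ ^ 2) := by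
    field_simp
  simp only [hF]
  linarith [hA, hB, hC, e3, e4, hLlam, eid]
end
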